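/- Peak of the burn-in phase for gradient descent (second part of Corollary 3.3): For every real κ with 0 < κ < 1 and every natural number t ≥ 1, ((1-κ)/(1+κ))^(t-1) · (2t - 1) ≤ 2/κ. Hence with G = 0 and step size h = 2/(L+ℓ), the worst-case Jacobian suboptimality bound of gradient descent never exceeds (2/κ)·‖∂x₀(θ) - ∂x⋆(θ)‖. -/

import Mathlib

/-- Peak of the burn-in phase for gradient descent (second part of Corollary 3.3):
`((1-κ)/(1+κ))^(t-1) * (2t - 1) ≤ 2/κ` for `0 < κ < 1` and `t ≥ 1`. -/
theorem gd_burn_in_peak (κ : ℝ) (hκ0 : 0 < κ) (hκ1 : κ < 1) (t : ℕ) (ht : 1 ≤ t) :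
    ((1 - κ) / (1 + κ)) ^ (t - 1) * (2 * (t : ℝ) - 1) ≤ 2 / κ := by
  obtain ⟨n, rfl⟩ : ∃ n, t = n + 1 := ⟨t - 1, (Nat.succ_pred_eq_of_pos ht).symm⟩
  simp only [Nat.add_sub_cancel]
  push_cast
  set ρ : ℝ := (1 - κ) / (1 + κ) with hρ
  have h1κ : (0:ℝ) < 1 - κ := by linarith
  have h2κ : (0:ℝ) < 1 + κ := by linarith
  have hρpos : 0 < ρ := div_pos h1κ h2κ
  -- Bernoulli
  have hbern : 1 + (n : ℝ) * (2 * κ / (1 - κ)) ≤ (1 + 2 * κ / (1 - κ)) ^ n := by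
    apply one_add_mul_le_pow
    have : (0:ℝ) < 2 * κ / (1 - κ) := by positivity
    linarith
  have hinv : (1 + 2 * κ / (1 - κ)) = 1 / ρ := by
    rw [hρ]
    field_simp
    ring
  have hkey : ρ ^ n * (1 + 2 * (n : ℝ) * κ) ≤ 1 := by
    have h2 : 1 + 2 * (n : ℝ) * κ ≤ (1 / ρ) ^ n := by
      rw [← hinv]
      refine le_trans ?_ hbern
      have hn0 : (0:ℝ) ≤ (n : ℝ) := Nat.cast_nonneg n
      have : 2 * κ ≤ 2 * κ / (1 - κ) := by
        rw [le_div_iff₀ h1κ]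
        nlinarith
      nlinarith
    have h3 : ρ ^ n * (1 + 2 * (n : ℝ) * κ) ≤ ρ ^ n * (1 / ρ) ^ n := by
      apply mul_le_mul_of_nonneg_left h2 (by positivity)
    calc ρ ^ n * (1 + 2 * (n : ℝ) * κ) ≤ ρ ^ n * (1 / ρ) ^ n := h3
      _ = 1 := by rw [← mul_pow]; field_simp; exact one_pow n
  rw [le_div_iff₀ hκ0]
  have hρn : (0:ℝ) ≤ ρ ^ n := by positivity
  have hn0 : (0:ℝ) ≤ (n : ℝ) := Nat.cast_nonneg n
  nlinarith [mul_nonneg hρn hn0]
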